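/- arXiv:1309.6070 — 3 statements merged into one kernel-verified Lean document; each statement's English description precedes it below -/
import Mathlib

section
/- Let u be an oriented word of rank k ≥ 2. The positive cone P_u = {g ∈ F_k : τ_u(g) > 0} is closed under word reversal of reduced words if and only if u = u^{-1} as words. -/
open FreeGroup

/-- A letter over the alphabet `{a_1,...,a_k, a_1⁻¹,...,a_k⁻¹}`:
`(i, true)` is the positive letter `a_i`, `(i, false)` is `a_i⁻¹`. -/
abbrev Letter (k : ℕ) := Fin k × Bool

/-- Formal inverse of a letter. -/
def invL {k : ℕ} (x : Letter k) : Letter k := (x.1, !x.2)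

/-- An oriented word of rank `k`: each of the `2k` letters appears exactly once. -/
def IsOriented {k : ℕ} (u : List (Letter k)) : Prop :=
  u.Nodup ∧ ∀ x : Letter k, x ∈ u

/-- `x` occurs to the left of `y` in `u`. -/
def leftOf {k : ℕ} (u : List (Letter k)) (x y : Letter k) : Prop :=
  u.idxOf x < u.idxOf y

instance {k : ℕ} (u : List (Letter k)) (x y : Letter k) : Decidable (leftOf u x y) :=
  inferInstanceAs (Decidable (_ < _))

/-- Number of occurrences of the two-letter word `xy` as a contiguous subword of `L`. -/
def cnt {k : ℕ} (L : List (Letter k)) (x y : Letter k) : ℕ :=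
  (L.zip L.tail).count (x, y)

/-- The case transition weight `α_u`, on a reduced word `L`. -/
noncomputable def alphaW {k : ℕ} (u L : List (Letter k)) : ℝ :=
  (∑ a : Fin k, ∑ b : Fin k,
      if leftOf u (a, false) (b, false) then (cnt L (a, true) (b, false) : ℝ) else 0)
  - ∑ a : Fin k, ∑ b : Fin k,
      if leftOf u (a, true) (b, true) then (cnt L (b, false) (a, true) : ℝ) else 0

/-- The letter transition weight `β_u`, on a reduced word `L`. -/
noncomputable def betaW {k : ℕ} (u L : List (Letter k)) : ℝ :=
  (∑ a : Fin k, ∑ b : Fin k,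
      if leftOf u (a, false) (b, true) then (cnt L (a, true) (b, true) : ℝ) else 0)
  - ∑ a : Fin k, ∑ b : Fin k,
      if leftOf u (a, false) (b, true) then (cnt L (b, false) (a, false) : ℝ) else 0

/-- The last letter weight `ω`, on a reduced word `L`. -/
noncomputable def omegaW {k : ℕ} (L : List (Letter k)) : ℝ :=
  match L.getLast? with
  | none => 0
  | some x => if x.2 then 1 / 2 else -(1 / 2)

/-- The weight `τ_u` induced by an oriented word `u`, evaluated on the reduced form. -/
noncomputable def tau {k : ℕ} (u : List (Letter k)) (g : FreeGroup (Fin k)) : ℝ :=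
  alphaW u g.toWord + betaW u g.toWord + omegaW g.toWord

/-- The weight contribution `wtc_u` of a reduced two-letter word `xy`. -/
noncomputable def wtc {k : ℕ} (u : List (Letter k)) (x y : Letter k) : ℝ :=
  if x.2 then (if leftOf u (x.1, false) y then 1 else 0)
  else (if leftOf u y (x.1, true) then -1 else 0)

/-- The inverse word of `u`. -/
def invWord {k : ℕ} (u : List (Letter k)) : List (Letter k) := (u.map invL).reverse

/-- A function `τ : G → ℝ` with small relative defect. -/
def SmallRelDefect {G : Type*} [Group G] (τ : G → ℝ) : Prop :=
  τ 1 = 0 ∧ ∀ g h : G, (g ≠ 1 ∨ h ≠ 1) → |τ g + τ h - τ (g * h)| < |τ g| + |τ h|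

/-! ### Auxiliary machinery -/

section Aux

variable {k : ℕ}

@[simp] lemma invL_invL (x : Letter k) : invL (invL x) = x := by
  simp [invL]

lemma beqL {k : ℕ} : (instBEqProd : BEq (Letter k)) = instBEqOfDecidableEq := by
  refine (beq_ext _ _ ?_).symm
  intro x y
  show decide (x = y) = (x == y)
  rcases eq_or_ne x y with rfl | h
  · simp
  · simp [h, beq_eq_false_iff_ne, h]

/-- `leftOf` with the `DecidableEq`-derived `BEq` instance. -/
lemma leftOf_def {k : ℕ} (u : List (Letter k)) (x y : Letter k) :
    leftOf u x y ↔ @List.idxOf _ instBEqOfDecidableEq x u <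
      @List.idxOf _ instBEqOfDecidableEq y u := by
  unfold leftOf
  rw [beqL]

lemma invL_involutive : Function.Involutive (invL (k := k)) := invL_invL

lemma invL_injective : Function.Injective (invL (k := k)) := invL_involutive.injective

/-- Reducedness of a word as a chain condition. -/
def Red' {k : ℕ} (L : List (Letter k)) : Prop :=
  List.Chain' (fun x y : Letter k => ¬(x.1 = y.1 ∧ x.2 = !y.2)) L

lemma red'_reduce (L : List (Letter k)) : Red' (FreeGroup.reduce L) := by
  induction L with
  | nil => exact List.isChain_nil
  | cons x t ih =>
    rw [FreeGroup.reduce.cons]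
    rcases h : FreeGroup.reduce t with _ | ⟨y, s⟩
    · exact List.isChain_singleton x
    · rw [h] at ih
      dsimp only
      split_ifs with hc
      · exact ih.tail
      · exact List.isChain_cons_cons.mpr ⟨hc, ih⟩

lemma reduce_eq_self {L : List (Letter k)} (h : Red' L) : FreeGroup.reduce L = L := by
  induction L with
  | nil => rfl
  | cons x t ih =>
    have ht : FreeGroup.reduce t = t := ih h.tail
    rw [FreeGroup.reduce.cons, ht]
    cases t with
    | nil => rfl
    | cons y s =>
      have hxy := (List.isChain_cons_cons.mp h).1
      simp only [if_neg hxy]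

lemma toWord_mk_red' {L : List (Letter k)} (h : Red' L) : (FreeGroup.mk L).toWord = L := by
  rw [FreeGroup.toWord_mk, reduce_eq_self h]

lemma red'_toWord (g : FreeGroup (Fin k)) : Red' g.toWord := by
  rw [← FreeGroup.reduce_toWord]; exact red'_reduce _

lemma red'_reverse {L : List (Letter k)} (h : Red' L) : Red' L.reverse := by
  show List.IsChain _ L.reverse; rw [List.isChain_reverse]
  refine List.IsChain.imp ?_ h
  rintro a b hab ⟨h1, h2⟩
  exact hab ⟨h1.symm, by rw [h2, Bool.not_not]⟩

/-- Sign weight of a letter. -/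
noncomputable def sigma' (x : Letter k) : ℝ := if x.2 then 1 / 2 else -(1 / 2)

/-- Sum of weight contributions of adjacent pairs. -/
noncomputable def pairSum (u : List (Letter k)) : List (Letter k) → ℝ
  | [] => 0
  | [_] => 0
  | x :: y :: t => wtc u x y + pairSum u (y :: t)

lemma omegaW_nil : omegaW ([] : List (Letter k)) = 0 := rfl

lemma omegaW_singleton (x : Letter k) : omegaW [x] = sigma' x := rfl

lemma omegaW_cons_cons (x y : Letter k) (t : List (Letter k)) :
    omegaW (x :: y :: t) = omegaW (y :: t) := by
  simp [omegaW, List.getLast?_cons_cons]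

lemma omegaW_concat (M : List (Letter k)) (x : Letter k) :
    omegaW (M ++ [x]) = sigma' x := by
  simp [omegaW, sigma', List.getLast?_concat]

lemma count_mul_sum (l : List ((Letter k) × (Letter k))) (f : Letter k × Letter k → ℝ) :
    ∑ p : (Letter k) × (Letter k), (l.count p : ℝ) * f p = (l.map f).sum := by
  induction l with
  | nil => simp
  | cons q t ih =>
    rw [List.map_cons, List.sum_cons, ← ih]
    have hterm : ∀ p : (Letter k) × (Letter k),
        ((q :: t).count p : ℝ) * f p = (t.count p : ℝ) * f p + (if p = q then f p else 0) := by
      intro p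
      rcases eq_or_ne p q with rfl | hne
      · simp [List.count_cons]
        push_cast
        ring
      · simp [List.count_cons, hne, Ne.symm hne]
    rw [Finset.sum_congr rfl (fun p _ => hterm p), Finset.sum_add_distrib]
    simp [add_comm]

lemma pairSum_eq (u L : List (Letter k)) :
    pairSum u L = ((L.zip L.tail).map (fun p => wtc u p.1 p.2)).sum := by
  induction L with
  | nil => simp [pairSum]
  | cons x t ih =>
    cases t with
    | nil => simp [pairSum]
    | cons y s =>
      rw [show pairSum u (x :: y :: s) = wtc u x y + pairSum u (y :: s) from rfl, ih]
      rfl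

lemma term_identity (u L : List (Letter k)) (a b : Fin k) :
    (if leftOf u (a, false) (b, false) then (cnt L (a, true) (b, false) : ℝ) else 0)
    - (if leftOf u (b, true) (a, true) then (cnt L (a, false) (b, true) : ℝ) else 0)
    + ((if leftOf u (a, false) (b, true) then (cnt L (a, true) (b, true) : ℝ) else 0)
    - (if leftOf u (b, false) (a, true) then (cnt L (a, false) (b, false) : ℝ) else 0))
    = (cnt L (a, true) (b, true) : ℝ) * wtc u (a, true) (b, true)
      + (cnt L (a, true) (b, false) : ℝ) * wtc u (a, true) (b, false)
      + ((cnt L (a, false) (b, true) : ℝ) * wtc u (a, false) (b, true)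
      + (cnt L (a, false) (b, false) : ℝ) * wtc u (a, false) (b, false)) := by
  have w1 : wtc u (a, true) (b, true) = if leftOf u (a, false) (b, true) then 1 else 0 := rfl
  have w2 : wtc u (a, true) (b, false) = if leftOf u (a, false) (b, false) then 1 else 0 := rfl
  have w3 : wtc u (a, false) (b, true) = if leftOf u (b, true) (a, true) then -1 else 0 := rfl
  have w4 : wtc u (a, false) (b, false) = if leftOf u (b, false) (a, true) then -1 else 0 := rfl
  rw [w1, w2, w3, w4]
  split_ifs <;> ring

/-- `alphaW + betaW` is the sum of the `wtc` over adjacent pairs. -/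
lemma alphaW_add_betaW (u L : List (Letter k)) :
    alphaW u L + betaW u L = pairSum u L := by
  rw [pairSum_eq, ← count_mul_sum]
  have expand : ∑ p : Letter k × Letter k, ((L.zip L.tail).count p : ℝ) * wtc u p.1 p.2
      = ∑ a : Fin k, ∑ b : Fin k,
          ((cnt L (a, true) (b, true) : ℝ) * wtc u (a, true) (b, true)
          + (cnt L (a, true) (b, false) : ℝ) * wtc u (a, true) (b, false)
          + ((cnt L (a, false) (b, true) : ℝ) * wtc u (a, false) (b, true)
          + (cnt L (a, false) (b, false) : ℝ) * wtc u (a, false) (b, false))) := by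
    simp only [Fintype.sum_prod_type, Fintype.sum_bool, cnt]
    refine Finset.sum_congr rfl fun a _ => ?_
    rw [← Finset.sum_add_distrib]
  rw [expand]
  have hc1 : (∑ a : Fin k, ∑ b : Fin k,
        if leftOf u (a, true) (b, true) then (cnt L (b, false) (a, true) : ℝ) else 0)
      = ∑ a : Fin k, ∑ b : Fin k,
        if leftOf u (b, true) (a, true) then (cnt L (a, false) (b, true) : ℝ) else 0 :=
    Finset.sum_comm
  have hc2 : (∑ a : Fin k, ∑ b : Fin k,
        if leftOf u (a, false) (b, true) then (cnt L (b, false) (a, false) : ℝ) else 0)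
      = ∑ a : Fin k, ∑ b : Fin k,
        if leftOf u (b, false) (a, true) then (cnt L (a, false) (b, false) : ℝ) else 0 :=
    Finset.sum_comm
  rw [alphaW, betaW, hc1, hc2]
  rw [← Finset.sum_sub_distrib, ← Finset.sum_sub_distrib, ← Finset.sum_add_distrib]
  refine Finset.sum_congr rfl fun a _ => ?_
  rw [← Finset.sum_sub_distrib, ← Finset.sum_sub_distrib, ← Finset.sum_add_distrib]
  refine Finset.sum_congr rfl fun b _ => ?_
  exact term_identity u L a b

/-- asymmetry of `leftOf`. -/
lemma leftOf_asymm {u : List (Letter k)} {x y : Letter k} (h : leftOf u x y) :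
    ¬ leftOf u y x := by
  unfold leftOf at *; omega

/-- totality of `leftOf` on an oriented word. -/
lemma leftOf_total {u : List (Letter k)} (hu : IsOriented u) {x y : Letter k} (hxy : x ≠ y) :
    leftOf u x y ∨ leftOf u y x := by
  have h2 := (List.idxOf_inj (hu.2 x)).not.mpr hxy
  unfold leftOf
  omega

lemma leftOf_iff_sublist {u : List (Letter k)} (hn : u.Nodup) {x y : Letter k}
    (hx : x ∈ u) (hy : y ∈ u) (hxy : x ≠ y) : leftOf u x y ↔ List.Sublist [x, y] u := by
  induction u with
  | nil => exact absurd hx (List.not_mem_nil)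
  | cons a t ih =>
    rcases eq_or_ne x a with rfl | hxa
    · have hyt : y ∈ t := by
        rcases List.mem_cons.mp hy with rfl | h
        · exact absurd rfl hxy
        · exact h
      refine iff_of_true ?_ ?_
      · unfold leftOf; rw [List.idxOf_cons_self, List.idxOf_cons_ne _ hxy]
        exact Nat.succ_pos _
      · exact List.cons_sublist_cons.mpr (List.singleton_sublist.mpr hyt)
    · rcases eq_or_ne y a with rfl | hya
      · refine iff_of_false ?_ ?_
        · unfold leftOf; rw [List.idxOf_cons_self]
          omega
        · intro hsub
          have hyt : y ∉ t := (List.nodup_cons.mp hn).1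
          cases hsub with
          | cons _ h => exact hyt (h.subset (by simp))
          | cons_cons => exact hxy rfl
      · have hxt : x ∈ t := by
          rcases List.mem_cons.mp hx with rfl | h
          · exact absurd rfl hxa
          · exact h
        have hyt : y ∈ t := by
          rcases List.mem_cons.mp hy with rfl | h
          · exact absurd rfl hya
          · exact h
        have h1 : leftOf (a :: t) x y ↔ leftOf t x y := by
          unfold leftOf; rw [List.idxOf_cons_ne _ (Ne.symm hxa),
            List.idxOf_cons_ne _ (Ne.symm hya)]
          exact Nat.succ_lt_succ_iff
        have h2 : List.Sublist [x, y] (a :: t) ↔ List.Sublist [x, y] t := by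
          constructor
          · intro hsub
            cases hsub with
            | cons _ h => exact h
            | cons_cons => exact absurd rfl hxa
          · exact fun h => h.cons a
        rw [h1, h2]
        exact ih (List.nodup_cons.mp hn).2 hxt hyt

lemma leftOf_invWord {u : List (Letter k)} (hu : IsOriented u) {x y : Letter k}
    (hxy : x ≠ y) : leftOf (invWord u) x y ↔ leftOf u (invL y) (invL x) := by
  have hnodup : (invWord u).Nodup := by
    rw [invWord, List.nodup_reverse]
    exact hu.1.map invL_injective
  have hmem : ∀ z : Letter k, z ∈ invWord u := by
    intro z
    rw [invWord, List.mem_reverse]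
    have : invL (invL z) ∈ List.map invL u := List.mem_map_of_mem (f := invL) (hu.2 (invL z))
    simpa using this
  have hmap : ∀ M : List (Letter k), List.map invL (List.map invL M) = M := by
    intro M
    rw [List.map_map]
    have : invL ∘ invL = (id : Letter k → Letter k) := funext invL_invL
    rw [this, List.map_id]
  rw [leftOf_iff_sublist hnodup (hmem x) (hmem y) hxy,
    leftOf_iff_sublist hu.1 (hu.2 _) (hu.2 _) (fun h => hxy (invL_injective h).symm)]
  rw [invWord, List.sublist_reverse_iff]
  show List.Sublist [y, x] (List.map invL u) ↔ _
  constructor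
  · intro h
    have := h.map invL
    rw [hmap] at this
    exact this
  · intro h
    have := h.map invL
    rw [show List.map invL [invL y, invL x] = [y, x] by simp] at this
    exact this

/-- The key symmetry consequence of `u = invWord u`. -/
lemma symm_of_eq_invWord {u : List (Letter k)} (hu : IsOriented u) (h : u = invWord u)
    (x y : Letter k) : leftOf u x y ↔ leftOf u (invL y) (invL x) := by
  rcases eq_or_ne x y with rfl | hxy
  · simp [leftOf]
  · calc leftOf u x y ↔ leftOf (invWord u) x y := by rw [← h]
      _ ↔ leftOf u (invL y) (invL x) := leftOf_invWord hu hxy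

/-- Swapping a reduced pair changes `wtc` by the difference of sign weights. -/
lemma wtc_swap {u : List (Letter k)} (hu : IsOriented u)
    (hs : ∀ x y : Letter k, leftOf u x y ↔ leftOf u (invL y) (invL x))
    {x y : Letter k} (hxy : ¬(x.1 = y.1 ∧ x.2 = !y.2)) :
    wtc u y x = wtc u x y + sigma' y - sigma' x := by
  obtain ⟨a, ε⟩ := x
  obtain ⟨b, δ⟩ := y
  have hkey := hs (a, false) (b, true)
  simp only [invL] at hkey
  -- hkey : leftOf u (a, false) (b, true) ↔ leftOf u (b, false) (a, true)
  cases ε <;> cases δ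
  · -- x = (a, false), y = (b, false)
    simp only [wtc, sigma']
    norm_num
    rw [show (b, !true) = (b, false) from rfl, show (a, !false) = (a, true) from rfl] at hkey
    simp only [hkey]
  · -- x = (a, false), y = (b, true)
    have hab : a ≠ b := by
      intro h
      exact hxy ⟨h, rfl⟩
    have h1 := hs (b, false) (a, false)
    simp only [invL] at h1
    rw [show ((a : Fin k), !false) = (a, true) from rfl,
      show ((b : Fin k), !false) = (b, true) from rfl] at h1
    -- h1 : leftOf u (b, false) (a, false) ↔ leftOf u (a, true) (b, true)
    have h2 : leftOf u (a, true) (b, true) ↔ ¬ leftOf u (b, true) (a, true) := by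
      constructor
      · exact fun h => leftOf_asymm h
      · intro h
        rcases leftOf_total hu (show ((a : Fin k), true) ≠ (b, true) from
          fun he => hab (congrArg Prod.fst he)) with h' | h'
        · exact h'
        · exact absurd h' h
    simp only [wtc, sigma']
    norm_num
    by_cases hP : leftOf u (b, true) (a, true)
    · rw [if_pos hP, if_neg (fun hc => (h2.mp (h1.mp hc)) hP)]
      norm_num
    · rw [if_neg hP, if_pos (h1.mpr (h2.mpr hP))]
      norm_num
  · -- x = (a, true), y = (b, false)
    have hab : a ≠ b := by
      intro h
      exact hxy ⟨h, rfl⟩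
    have h1 := hs (a, false) (b, false)
    simp only [invL] at h1
    rw [show ((a : Fin k), !false) = (a, true) from rfl,
      show ((b : Fin k), !false) = (b, true) from rfl] at h1
    -- h1 : leftOf u (a, false) (b, false) ↔ leftOf u (b, true) (a, true)
    have h2 : leftOf u (b, true) (a, true) ↔ ¬ leftOf u (a, true) (b, true) := by
      constructor
      · exact fun h => leftOf_asymm h
      · intro h
        rcases leftOf_total hu (show ((a : Fin k), true) ≠ (b, true) from
          fun he => hab (congrArg Prod.fst he)) with h' | h'
        · exact absurd h' h
        · exact h'
    simp only [wtc, sigma']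
    norm_num
    by_cases hP : leftOf u (a, true) (b, true)
    · rw [if_pos hP, if_neg (fun hc => (h2.mp (h1.mp hc)) hP)]
      norm_num
    · rw [if_neg hP, if_pos (h1.mpr (h2.mpr hP))]
      norm_num
  · -- x = (a, true), y = (b, true)
    simp only [wtc, sigma']
    norm_num
    rw [show (b, !true) = (b, false) from rfl, show (a, !false) = (a, true) from rfl] at hkey
    simp only [hkey]

lemma omegaW_eq_sigma {M : List (Letter k)} {z : Letter k} (h : M.getLast? = some z) :
    omegaW M = sigma' z := by
  rw [omegaW, h]
  rfl

lemma pairSum_concat (u : List (Letter k)) :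
    ∀ (M : List (Letter k)) (x y : Letter k), M.getLast? = some y →
      pairSum u (M ++ [x]) = pairSum u M + wtc u y x
  | [], x, y, h => by simp at h
  | [z], x, y, h => by
      simp only [List.getLast?_singleton, Option.some.injEq] at h
      subst h
      show wtc u z x + 0 = 0 + wtc u z x
      ring
  | z :: w :: t, x, y, h => by
      have h' : (w :: t).getLast? = some y := by rwa [List.getLast?_cons_cons] at h
      show wtc u z w + pairSum u ((w :: t) ++ [x]) = wtc u z w + pairSum u (w :: t) + wtc u y x
      rw [pairSum_concat u (w :: t) x y h']
      ring

/-- Main forward computation: `tau` is invariant under reversal of reduced words,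
assuming the symmetry of `u`. -/
lemma pairSum_omega_reverse {u : List (Letter k)} (hu : IsOriented u)
    (hs : ∀ x y : Letter k, leftOf u x y ↔ leftOf u (invL y) (invL x)) :
    ∀ L : List (Letter k), Red' L →
      pairSum u L.reverse + omegaW L.reverse = pairSum u L + omegaW L := by
  intro L
  induction L with
  | nil => intro _; rfl
  | cons x t ih =>
    intro hL
    cases t with
    | nil => simp
    | cons y s =>
      have hred : Red' (y :: s) := hL.tail
      have hxy : ¬(x.1 = y.1 ∧ x.2 = !y.2) := (List.isChain_cons_cons.mp hL).1
      have ihe := ih hred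
      have hrev : (x :: y :: s).reverse = (y :: s).reverse ++ [x] := by simp
      have hlast : ((y :: s).reverse).getLast? = some y := by simp
      rw [hrev, pairSum_concat u _ x y hlast, omegaW_concat]
      have h1 : omegaW ((y :: s).reverse) = sigma' y := omegaW_eq_sigma hlast
      have hswap := wtc_swap hu hs hxy
      have h2 : pairSum u (x :: y :: s) = wtc u x y + pairSum u (y :: s) := rfl
      have h3 : omegaW (x :: y :: s) = omegaW (y :: s) := omegaW_cons_cons x y s
      rw [h2, h3]
      linarith [ihe, h1, hswap]

lemma tau_mk {u : List (Letter k)} {L : List (Letter k)} (h : Red' L) :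
    tau u (FreeGroup.mk L) = pairSum u L + omegaW L := by
  rw [tau, toWord_mk_red' h, alphaW_add_betaW]

lemma red'_pair {x y : Letter k} (h : x.1 ≠ y.1) : Red' [x, y] :=
  List.isChain_pair.mpr (fun hc => h hc.1)

lemma red'_triple {x y z : Letter k} (h1 : x.1 ≠ y.1) (h2 : y.1 ≠ z.1) : Red' [x, y, z] :=
  List.isChain_cons_cons.mpr ⟨fun hc => h1 hc.1, red'_pair h2⟩

lemma tau_mk_reverse {u : List (Letter k)} {L : List (Letter k)} (h : Red' L) :
    tau u (FreeGroup.mk ((FreeGroup.mk L).toWord.reverse))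
      = pairSum u L.reverse + omegaW L.reverse := by
  rw [toWord_mk_red' h, tau_mk (red'_reverse h)]

lemma witness_same {u : List (Letter k)} (hu : IsOriented u) {a b : Fin k} (hab : a ≠ b)
    (hAB : leftOf u (a, true) (b, true)) (hA'B' : leftOf u (a, false) (b, false)) :
    ∃ g : FreeGroup (Fin k), 0 < tau u g ∧ ¬ 0 < tau u (FreeGroup.mk g.toWord.reverse) := by
  have hred : Red' [((a : Fin k), false), (b, true)] := red'_pair hab
  refine ⟨FreeGroup.mk [((a : Fin k), false), (b, true)], ?_, ?_⟩
  · rw [tau_mk hred]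
    have h1 : pairSum u [((a : Fin k), false), (b, true)] = wtc u (a, false) (b, true) := by
      show wtc u (a, false) (b, true) + 0 = _
      ring
    have h2 : wtc u ((a : Fin k), false) (b, true) = 0 := by
      show (if leftOf u (b, true) (a, true) then (-1 : ℝ) else 0) = 0
      rw [if_neg (leftOf_asymm hAB)]
    rw [h1, h2]
    norm_num [omegaW]
  · rw [tau_mk_reverse hred]
    have h1 : pairSum u [((a : Fin k), false), (b, true)].reverse
        = wtc u (b, true) (a, false) := by
      show wtc u (b, true) (a, false) + 0 = _
      ring
    have h2 : wtc u ((b : Fin k), true) (a, false) = 0 := by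
      show (if leftOf u (b, false) (a, false) then (1 : ℝ) else 0) = 0
      rw [if_neg (leftOf_asymm hA'B')]
    rw [h1, h2]
    norm_num [omegaW]

lemma witness_mixed {u : List (Letter k)} (hu : IsOriented u) {a b : Fin k} (hab : a ≠ b)
    (hAB' : leftOf u (a, true) (b, false)) (hA'B : leftOf u (a, false) (b, true)) :
    ∃ g : FreeGroup (Fin k), 0 < tau u g ∧ ¬ 0 < tau u (FreeGroup.mk g.toWord.reverse) := by
  have hne1 : ((a : Fin k), true) ≠ (b, true) := fun h => hab (congrArg Prod.fst h)
  have hne2 : ((a : Fin k), false) ≠ (b, false) := fun h => hab (congrArg Prod.fst h)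
  by_cases hP : leftOf u (a, true) (b, true) <;> by_cases hQ : leftOf u (a, false) (b, false)
  · exact witness_same hu hab hP hQ
  · -- P and ¬Q : order a < b⁻¹ < a⁻¹ < b ; witness b a⁻¹ b⁻¹
    have hQ' : leftOf u (b, false) (a, false) := (leftOf_total hu hne2).resolve_left hQ
    have hred : Red' [((b : Fin k), true), (a, false), (b, false)] :=
      red'_triple (Ne.symm hab) hab
    refine ⟨FreeGroup.mk [((b : Fin k), true), (a, false), (b, false)], ?_, ?_⟩
    · rw [tau_mk hred]
      have h1 : pairSum u [((b : Fin k), true), (a, false), (b, false)]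
          = wtc u (b, true) (a, false) + (wtc u (a, false) (b, false) + 0) := rfl
      have h2 : wtc u ((b : Fin k), true) (a, false) = 1 := by
        show (if leftOf u (b, false) (a, false) then (1 : ℝ) else 0) = 1
        rw [if_pos hQ']
      have h3 : wtc u ((a : Fin k), false) (b, false) = 0 := by
        show (if leftOf u (b, false) (a, true) then (-1 : ℝ) else 0) = 0
        rw [if_neg (leftOf_asymm hAB')]
      rw [h1, h2, h3]
      norm_num [omegaW]
    · rw [tau_mk_reverse hred]
      have h1 : pairSum u [((b : Fin k), true), (a, false), (b, false)].reverse
          = wtc u (b, false) (a, false) + (wtc u (a, false) (b, true) + 0) := rfl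
      have h2 : wtc u ((b : Fin k), false) (a, false) = -1 := by
        show (if leftOf u (a, false) (b, true) then (-1 : ℝ) else 0) = -1
        rw [if_pos hA'B]
      have h3 : wtc u ((a : Fin k), false) (b, true) = 0 := by
        show (if leftOf u (b, true) (a, true) then (-1 : ℝ) else 0) = 0
        rw [if_neg (leftOf_asymm hP)]
      rw [h1, h2, h3]
      norm_num [omegaW]
  · -- ¬P and Q : order a⁻¹ < b < a < b⁻¹ ; witness a b a⁻¹
    have hP' : leftOf u (b, true) (a, true) := (leftOf_total hu hne1).resolve_left hP
    have hred : Red' [((a : Fin k), true), (b, true), (a, false)] :=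
      red'_triple hab (Ne.symm hab)
    refine ⟨FreeGroup.mk [((a : Fin k), true), (b, true), (a, false)], ?_, ?_⟩
    · rw [tau_mk hred]
      have h1 : pairSum u [((a : Fin k), true), (b, true), (a, false)]
          = wtc u (a, true) (b, true) + (wtc u (b, true) (a, false) + 0) := rfl
      have h2 : wtc u ((a : Fin k), true) (b, true) = 1 := by
        show (if leftOf u (a, false) (b, true) then (1 : ℝ) else 0) = 1
        rw [if_pos hA'B]
      have h3 : wtc u ((b : Fin k), true) (a, false) = 0 := by
        show (if leftOf u (b, false) (a, false) then (1 : ℝ) else 0) = 0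
        rw [if_neg (leftOf_asymm hQ)]
      rw [h1, h2, h3]
      norm_num [omegaW]
    · rw [tau_mk_reverse hred]
      have h1 : pairSum u [((a : Fin k), true), (b, true), (a, false)].reverse
          = wtc u (a, false) (b, true) + (wtc u (b, true) (a, true) + 0) := rfl
      have h2 : wtc u ((a : Fin k), false) (b, true) = -1 := by
        show (if leftOf u (b, true) (a, true) then (-1 : ℝ) else 0) = -1
        rw [if_pos hP']
      have h3 : wtc u ((b : Fin k), true) (a, true) = 0 := by
        show (if leftOf u (b, false) (a, true) then (1 : ℝ) else 0) = 0
        rw [if_neg (leftOf_asymm hAB')]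
      rw [h1, h2, h3]
      norm_num [omegaW]
  · exact witness_same hu (Ne.symm hab) ((leftOf_total hu hne1).resolve_left hP)
      ((leftOf_total hu hne2).resolve_left hQ)

/-- Discrepancy extraction for distinct lists with the same elements. -/
lemma exists_discrepancy {α : Type*} [DecidableEq α] :
    ∀ (l₁ l₂ : List α), l₁.Nodup → l₂.Nodup → (∀ x, x ∈ l₁ ↔ x ∈ l₂) → l₁ ≠ l₂ →
      ∃ x y, x ∈ l₁ ∧ y ∈ l₁ ∧ x ≠ y ∧ l₁.idxOf x < l₁.idxOf y ∧
        l₂.idxOf y < l₂.idxOf x := by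
  intro l₁
  induction l₁ with
  | nil =>
    intro l₂ _ _ hmem hne
    exfalso
    apply hne
    cases l₂ with
    | nil => rfl
    | cons b t => exact absurd ((hmem b).mpr (by simp)) (List.not_mem_nil)
  | cons a t₁ ih =>
    intro l₂ hn₁ hn₂ hmem hne
    cases l₂ with
    | nil => exact absurd ((hmem a).mp (by simp)) (List.not_mem_nil)
    | cons b t₂ =>
      rcases eq_or_ne a b with rfl | hab
      · have hat₁ : a ∉ t₁ := (List.nodup_cons.mp hn₁).1
        have hat₂ : a ∉ t₂ := (List.nodup_cons.mp hn₂).1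
        have hmem' : ∀ x, x ∈ t₁ ↔ x ∈ t₂ := by
          intro x
          constructor
          · intro h
            rcases List.mem_cons.mp ((hmem x).mp (List.mem_cons_of_mem a h)) with rfl | h2
            · exact absurd h hat₁
            · exact h2
          · intro h
            rcases List.mem_cons.mp ((hmem x).mpr (List.mem_cons_of_mem a h)) with rfl | h2
            · exact absurd h hat₂
            · exact h2
        have hne' : t₁ ≠ t₂ := fun h => hne (by rw [h])
        obtain ⟨x, y, hx, hy, hxy, h1, h2⟩ :=
          ih t₂ (List.nodup_cons.mp hn₁).2 (List.nodup_cons.mp hn₂).2 hmem' hne'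
        refine ⟨x, y, List.mem_cons_of_mem a hx, List.mem_cons_of_mem a hy, hxy, ?_, ?_⟩
        · rw [List.idxOf_cons_ne _ (fun h => hat₁ (by rw [h]; exact hx)),
            List.idxOf_cons_ne _ (fun h => hat₁ (by rw [h]; exact hy))]
          exact Nat.succ_lt_succ h1
        · rw [List.idxOf_cons_ne _ (fun h => hat₂ (by rw [h]; exact (hmem' y).mp hy)),
            List.idxOf_cons_ne _ (fun h => hat₂ (by rw [h]; exact (hmem' x).mp hx))]
          exact Nat.succ_lt_succ h2
      · refine ⟨a, b, by simp, ?_, hab, ?_, ?_⟩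
        · exact (hmem b).mpr (by simp)
        · rw [List.idxOf_cons_self, List.idxOf_cons_ne _ hab]
          exact Nat.succ_pos _
        · rw [List.idxOf_cons_self, List.idxOf_cons_ne _ (Ne.symm hab)]
          exact Nat.succ_pos _

end Aux

theorem stmt14 {k : ℕ} (hk : 2 ≤ k) (u : List (Letter k)) (hu : IsOriented u) :
    (∀ g : FreeGroup (Fin k), 0 < tau u g → 0 < tau u (FreeGroup.mk g.toWord.reverse))
    ↔ u = invWord u := by
  constructor
  · intro hcl
    by_contra hne
    have hnodup : (invWord u).Nodup := by
      rw [invWord, List.nodup_reverse]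
      exact hu.1.map invL_injective
    have hmem : ∀ z : Letter k, z ∈ invWord u := by
      intro z
      rw [invWord, List.mem_reverse]
      have : invL (invL z) ∈ List.map invL u := List.mem_map_of_mem (f := invL) (hu.2 (invL z))
      simpa using this
    obtain ⟨x, y, hx, hy, hxy, h1, h2⟩ := exists_discrepancy u (invWord u) hu.1 hnodup
      (fun z => iff_of_true (hu.2 z) (hmem z)) hne
    have hA : leftOf u x y := (leftOf_def u x y).mpr h1
    have hB : leftOf u (invL x) (invL y) :=
      (leftOf_invWord hu (Ne.symm hxy)).mp ((leftOf_def (invWord u) y x).mpr h2)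
    have hyx : y ≠ invL x := by
      intro h
      rw [h] at hA hB
      rw [show invL (invL x) = x from invL_invL x] at hB
      exact leftOf_asymm hA hB
    obtain ⟨a, ε⟩ := x
    obtain ⟨b, δ⟩ := y
    have hab : a ≠ b := by
      intro h
      subst h
      have : ((a : Fin k), ε) = (a, δ) ∨ ((a : Fin k), δ) = invL (a, ε) := by
        cases ε <;> cases δ <;> simp [invL]
      rcases this with h | h
      · exact hxy h
      · exact hyx h
    simp only [invL] at hB
    have hw : ∃ g : FreeGroup (Fin k), 0 < tau u g ∧
        ¬ 0 < tau u (FreeGroup.mk g.toWord.reverse) := by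
      cases ε <;> cases δ
      · -- (a,false) < (b,false) and (a,true) < (b,true)
        exact witness_same hu hab (by simpa using hB) hA
      · -- (a,false) < (b,true) and (a,true) < (b,false)
        exact witness_mixed hu hab (by simpa using hB) hA
      · -- (a,true) < (b,false) and (a,false) < (b,true)
        exact witness_mixed hu hab hA (by simpa using hB)
      · exact witness_same hu hab hA (by simpa using hB)
    obtain ⟨g, hg1, hg2⟩ := hw
    exact hg2 (hcl g hg1)
  · intro h g hg
    have hs := symm_of_eq_invWord hu h
    have hred := red'_toWord g
    have e1 : tau u (FreeGroup.mk g.toWord.reverse)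
        = pairSum u g.toWord.reverse + omegaW g.toWord.reverse := tau_mk (red'_reverse hred)
    have e2 : tau u g = pairSum u g.toWord + omegaW g.toWord := by
      rw [tau, alphaW_add_betaW]
    rw [e1, pairSum_omega_reverse hu hs g.toWord hred, ← e2]
    exact hg
end

section
/- For any two oriented words u and u' of rank k ≥ 2, the difference of the weight functions is a sum of Brooks quasi-characters: τ_u − τ_{u'} = Σ φ_{x^{-1}y}, where the sum is over all (unordered) pairs of distinct letters x, y ∈ A ∪ A^{-1} such that x occurs left of y in u and y occurs left of x in u'. -/
open FreeGroup

/-- The contribution of an ordered pair of letters to `α_u + β_u`. -/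
noncomputable def cf {k : ℕ} (L : List (Letter k)) (x y : Letter k) : ℝ :=
  if x.2 then (if y.2 then -(cnt L (invL y) x : ℝ) else 0)
  else (if y.2 then (cnt L (invL x) y : ℝ) - (cnt L (invL y) x : ℝ)
        else (cnt L (invL x) y : ℝ))

lemma cf_sub {k : ℕ} (L : List (Letter k)) (x y : Letter k) :
    cf L x y - cf L y x = (cnt L (invL x) y : ℝ) - (cnt L (invL y) x : ℝ) := by
  obtain ⟨a, s⟩ := x; obtain ⟨b, t⟩ := y
  cases s <;> cases t <;> simp [cf] <;> ring

lemma ab_eq {k : ℕ} (u L : List (Letter k)) :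
    alphaW u L + betaW u L
      = ∑ x : Letter k, ∑ y : Letter k, if leftOf u x y then cf L x y else 0 := by
  simp only [alphaW, betaW, cf, invL, Fintype.sum_prod_type, Fintype.sum_bool,
    if_true, if_false, Bool.not_true, Bool.not_false,
    ← Finset.sum_add_distrib, ← Finset.sum_sub_distrib]
  refine Finset.sum_congr rfl fun a _ => Finset.sum_congr rfl fun b _ => ?_
  split_ifs <;> first | contradiction | ring

lemma oriented_tri {k : ℕ} {u : List (Letter k)} (hu : IsOriented u)
    {x y : Letter k} (hxy : x ≠ y) : leftOf u x y ∨ leftOf u y x := by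
  unfold leftOf
  rcases lt_trichotomy (u.idxOf x) (u.idxOf y) with h | h | h
  · exact Or.inl h
  · have h1 : @LawfulBEq (Letter k)
        (@instBEqProd (Fin k) Bool instBEqOfDecidableEq instBEqOfDecidableEq) :=
      @Prod.instLawfulBEq _ _ _ _ instLawfulBEq instLawfulBEq
    have h2 : @LawfulBEq (Letter k) instBEqOfDecidableEq := instLawfulBEq
    have e : (@instBEqProd (Fin k) Bool instBEqOfDecidableEq instBEqOfDecidableEq
        : BEq (Letter k)) = instBEqOfDecidableEq :=
      @lawful_beq_subsingleton (Letter k) _ _ h1 h2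
    rw [e] at h
    exact absurd ((@List.idxOf_inj _ instBEqOfDecidableEq instLawfulBEq _ _ y (hu.2 x)).mp h) hxy
  · exact Or.inr h

theorem stmt17 {k : ℕ} (hk : 2 ≤ k) (u u' : List (Letter k))
    (hu : IsOriented u) (hu' : IsOriented u') (g : FreeGroup (Fin k)) :
    tau u g - tau u' g
      = ∑ x : Letter k, ∑ y : Letter k,
          if leftOf u x y ∧ leftOf u' y x
          then (cnt g.toWord (invL x) y : ℝ) - cnt g.toWord (invL y) x
          else 0 := by
  set L := g.toWord with hL
  have h1 : tau u g - tau u' g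
      = (∑ x : Letter k, ∑ y : Letter k, if leftOf u x y then cf L x y else 0)
        - (∑ x : Letter k, ∑ y : Letter k, if leftOf u' x y then cf L x y else 0) := by
    rw [← ab_eq u L, ← ab_eq u' L]
    simp only [tau, ← hL]
    ring
  have h2 : ∀ x y : Letter k,
      ((if leftOf u x y then cf L x y else 0) - (if leftOf u' x y then cf L x y else 0))
      = (if leftOf u x y ∧ leftOf u' y x then cf L x y else 0)
        - (if leftOf u y x ∧ leftOf u' x y then cf L x y else 0) := by
    intro x y
    by_cases hxy : x = y
    · subst hxy; simp [leftOf]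
    · by_cases p1 : leftOf u x y <;> by_cases p2 : leftOf u' x y
      · have q2 : ¬ leftOf u' y x := lt_asymm p2
        have q1 : ¬ leftOf u y x := lt_asymm p1
        simp [p1, p2, q1, q2]
      · have q2 : leftOf u' y x := (oriented_tri hu' hxy).resolve_left p2
        simp [p1, p2, q2]
      · have q1 : leftOf u y x := (oriented_tri hu hxy).resolve_left p1
        simp [p1, p2, q1]
      · simp [p1, p2]
  have h3 : (∑ x : Letter k, ∑ y : Letter k,
        if leftOf u y x ∧ leftOf u' x y then cf L x y else 0)
      = ∑ x : Letter k, ∑ y : Letter k,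
        if leftOf u x y ∧ leftOf u' y x then cf L y x else 0 := by
    rw [Finset.sum_comm]
  rw [h1, ← Finset.sum_sub_distrib]
  simp only [← Finset.sum_sub_distrib, h2]
  simp only [Finset.sum_sub_distrib]
  rw [h3, ← Finset.sum_sub_distrib]
  simp only [← Finset.sum_sub_distrib]
  refine Finset.sum_congr rfl fun x _ => Finset.sum_congr rfl fun y _ => ?_
  split_ifs with h
  · exact cf_sub L x y
  · ring
end

section
/- For every oriented word u of rank k ≥ 2 and every g ∈ F_k, τ_u(g) + τ_{u^rev}(g) = e(g), where u^rev is the reversal of u and e : F_k → ℤ is the total exponent homomorphism (sum of exponents of all letters of g). -/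
open FreeGroup

lemma mem_zip_tail' {α : Type*} : ∀ {L : List α} {p : α × α}, p ∈ L.zip L.tail →
    ∃ l1 l2, L = l1 ++ p.1 :: p.2 :: l2
  | [], p, h => by simp at h
  | [a], p, h => by simp at h
  | a :: b :: L', p, h => by
      simp only [List.tail_cons, List.zip_cons_cons, List.mem_cons] at h
      rcases h with h | h
      · exact ⟨[], L', by simp [h]⟩
      · obtain ⟨l1, l2, hl⟩ := mem_zip_tail' (L := b :: L') (by simpa using h)
        exact ⟨a :: l1, l2, by simp [hl]⟩

lemma cnt_toWord_inv {k : ℕ} (g : FreeGroup (Fin k)) (a : Fin k) (b : Bool) :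
    cnt g.toWord (a, b) (a, !b) = 0 := by
  rw [cnt, List.count_eq_zero]
  intro hmem
  obtain ⟨l1, l2, hl⟩ := mem_zip_tail' hmem
  exact FreeGroup.reduce.not (L₂ := l1) (L₃ := l2) (x := a) (b := b)
    (by rw [FreeGroup.reduce_toWord]; exact hl)

lemma indexOf_reverse' {α : Type*} [DecidableEq α] {u : List α} (hn : u.Nodup) {x : α}
    (hx : x ∈ u) : u.reverse.idxOf x = u.length - 1 - u.idxOf x := by
  have hi : u.idxOf x < u.length := List.idxOf_lt_length_iff.2 hx
  have hj : u.length - 1 - u.idxOf x < u.reverse.length := by simp; omega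
  have h2 : u.reverse[u.length - 1 - u.idxOf x]'hj = x := by
    rw [List.getElem_reverse]
    have e : u.length - 1 - (u.length - 1 - u.idxOf x) = u.idxOf x := by omega
    simp only [e]
    exact List.getElem_idxOf hi
  conv_lhs => rw [← h2]
  exact List.Nodup.idxOf_getElem (List.nodup_reverse.2 hn) _ _

lemma indicator_pair {k : ℕ} {u : List (Letter k)} (hu : IsOriented u) {x y : Letter k}
    (hxy : x ≠ y) (c : ℝ) :
    (if leftOf u x y then c else 0) + (if leftOf u.reverse x y then c else 0) = c := by
  obtain ⟨hn, hall⟩ := hu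
  have hb : (instBEqProd : BEq (Letter k)) = instBEqOfDecidableEq :=
    @lawful_beq_subsingleton _ _ _ inferInstance (@instLawfulBEq _ instDecidableEqProd)
  have hidx : ∀ (v : List (Letter k)) (z : Letter k),
      List.idxOf z v = @List.idxOf _ instBEqOfDecidableEq z v := by
    rw [hb]; exact fun _ _ => rfl
  have hx := hall x; have hy := hall y
  have hix : List.idxOf x u < u.length := by
    exact List.idxOf_lt_length_iff.2 hx
  have hiy : List.idxOf y u < u.length := by
    exact List.idxOf_lt_length_iff.2 hy
  have hne : List.idxOf x u ≠ List.idxOf y u := by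
    exact fun h => hxy ((List.idxOf_inj hx).1 h)
  have hrx : List.idxOf x u.reverse = u.length - 1 - List.idxOf x u := by
    rw [hidx, hidx]; exact indexOf_reverse' hn hx
  have hry : List.idxOf y u.reverse = u.length - 1 - List.idxOf y u := by
    rw [hidx, hidx]; exact indexOf_reverse' hn hy
  split_ifs with h1 h2 h3 <;> simp only [leftOf] at *
  · exfalso; rw [hrx, hry] at h2; omega
  · ring
  · ring
  · exfalso; rw [hrx, hry] at h3; omega

lemma pair_sum {k : ℕ} {u : List (Letter k)} (hu : IsOriented u)
    (x y : Letter k) (c : ℝ) (hc : x = y → c = 0) :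
    (if leftOf u x y then c else 0) + (if leftOf u.reverse x y then c else 0) = c := by
  by_cases h : x = y
  · subst h; simp [leftOf, hc rfl]
  · exact indicator_pair hu h c

lemma sum_count_mul {γ : Type*} [Fintype γ] [DecidableEq γ] [BEq γ] [LawfulBEq γ]
    (l : List γ) (f : γ → ℝ) :
    ∑ z : γ, (l.count z : ℝ) * f z = (l.map f).sum := by
  induction l with
  | nil => simp
  | cons a l ih =>
    have he : ∀ z : γ, ((a :: l).count z : ℝ) * f z
        = (l.count z : ℝ) * f z + (if z = a then f z else 0) := by
      intro z; by_cases h : z = a <;> simp [List.count_cons, h, add_mul] <;> exact fun h' => absurd h'.symm h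
    simp only [he, Finset.sum_add_distrib, ih, Finset.sum_ite_eq' Finset.univ a f,
      Finset.mem_univ, if_pos, List.map_cons, List.sum_cons]
    ring

lemma zip_sum_omega {k : ℕ} : ∀ (L : List (Letter k)),
    ((L.zip L.tail).map (fun p : Letter k × Letter k => if p.1.2 then (1:ℝ) else -1)).sum
      + 2 * omegaW L = (L.map fun x => if x.2 then (1:ℝ) else -1).sum
  | [] => by simp [omegaW]
  | [x] => by cases hx : x.2 <;> simp [omegaW, hx]
  | x :: y :: L' => by
      have ih := zip_sum_omega (y :: L')
      have ho : omegaW (x :: y :: L') = omegaW (y :: L') := by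
        unfold omegaW; rw [List.getLast?_cons_cons]
      simp only [List.tail_cons, List.zip_cons_cons, List.map_cons, List.sum_cons] at ih ⊢
      rw [ho]
      linarith

theorem stmt18 {k : ℕ} (hk : 2 ≤ k) (u : List (Letter k)) (hu : IsOriented u)
    (g : FreeGroup (Fin k)) :
    tau u g + tau u.reverse g
      = (g.toWord.map fun x => if x.2 then (1 : ℝ) else -1).sum := by
  classical
  unfold tau
  set L := g.toWord with hL
  -- pairing for alpha
  have hA : alphaW u L + alphaW u.reverse L
      = (∑ a : Fin k, ∑ b : Fin k, (cnt L (a, true) (b, false) : ℝ))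
        - ∑ a : Fin k, ∑ b : Fin k, (cnt L (b, false) (a, true) : ℝ) := by
    unfold alphaW
    rw [sub_add_sub_comm]
    congr 1
    · rw [← Finset.sum_add_distrib]
      refine Finset.sum_congr rfl fun a _ => ?_
      rw [← Finset.sum_add_distrib]
      refine Finset.sum_congr rfl fun b _ => ?_
      refine pair_sum hu _ _ _ fun h => ?_
      have hab : a = b := congrArg Prod.fst h
      subst hab
      rw [hL]
      norm_cast
      simpa using cnt_toWord_inv g a true
    · rw [← Finset.sum_add_distrib]
      refine Finset.sum_congr rfl fun a _ => ?_
      rw [← Finset.sum_add_distrib]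
      refine Finset.sum_congr rfl fun b _ => ?_
      refine pair_sum hu _ _ _ fun h => ?_
      have hab : a = b := congrArg Prod.fst h
      subst hab
      rw [hL]
      norm_cast
      simpa using cnt_toWord_inv g a false
  -- pairing for beta
  have hB : betaW u L + betaW u.reverse L
      = (∑ a : Fin k, ∑ b : Fin k, (cnt L (a, true) (b, true) : ℝ))
        - ∑ a : Fin k, ∑ b : Fin k, (cnt L (b, false) (a, false) : ℝ) := by
    unfold betaW
    rw [sub_add_sub_comm]
    congr 1
    · rw [← Finset.sum_add_distrib]
      refine Finset.sum_congr rfl fun a _ => ?_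
      rw [← Finset.sum_add_distrib]
      refine Finset.sum_congr rfl fun b _ => ?_
      refine pair_sum hu _ _ _ fun h => absurd h (by simp)
    · rw [← Finset.sum_add_distrib]
      refine Finset.sum_congr rfl fun a _ => ?_
      rw [← Finset.sum_add_distrib]
      refine Finset.sum_congr rfl fun b _ => ?_
      refine pair_sum hu _ _ _ fun h => absurd h (by simp)
  -- total count identity
  have hcount := sum_count_mul (L.zip L.tail)
    (fun p : Letter k × Letter k => if p.1.2 then (1 : ℝ) else -1)
  have hexp : (∑ z : Letter k × Letter k,
        (((L.zip L.tail).count z : ℝ) * (if z.1.2 then (1 : ℝ) else -1)))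
      = (∑ a : Fin k, ∑ b : Fin k, (cnt L (a, true) (b, true) : ℝ))
        + (∑ a : Fin k, ∑ b : Fin k, (cnt L (a, true) (b, false) : ℝ))
        - (∑ a : Fin k, ∑ b : Fin k, (cnt L (a, false) (b, true) : ℝ))
        - (∑ a : Fin k, ∑ b : Fin k, (cnt L (a, false) (b, false) : ℝ)) := by
    simp only [Fintype.sum_prod_type, Fintype.sum_bool, cnt, if_true, if_false,
      mul_one, mul_neg_one, Bool.false_eq_true, Finset.sum_add_distrib, Finset.sum_neg_distrib]
    ring
  have hswap1 : (∑ a : Fin k, ∑ b : Fin k, (cnt L (b, false) (a, true) : ℝ))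
      = ∑ a : Fin k, ∑ b : Fin k, (cnt L (a, false) (b, true) : ℝ) := Finset.sum_comm
  have hswap2 : (∑ a : Fin k, ∑ b : Fin k, (cnt L (b, false) (a, false) : ℝ))
      = ∑ a : Fin k, ∑ b : Fin k, (cnt L (a, false) (b, false) : ℝ) := Finset.sum_comm
  have hzo := zip_sum_omega L
  simp only [hexp] at hcount
  linarith [hA, hB, hcount, hzo, hswap1, hswap2]
end
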